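/- Let W be the lazy random walk on a finite simple connected regular graph G = (V,E). Fix s, s', N, q ∈ ℕ with N ≥ s, s ≥ 6s', and 2s' ≥ q·t_mix + 1. Call ℓ a (2s')-local cut point of a path γ if R^γ([ℓ−2s', ℓ]) ∩ R^γ([ℓ+1, ℓ+2s']) = ∅. Then for every starting vertex ρ, the probability that every window [m, m+s], m ∈ [0, N−s], contains a (2s')-local cut point of W is at least 1 − (N−s+1)·( (q̄^G(2s'))^{⌊s/(6s')⌋} + s/(3·4^q·s') ), where q̄^G(2s') = (1/#V) Σ_ρ P_{(ρ,ρ)}(R^{W_1}([0,2s']) ∩ R^{W_2}([1,2s']) ≠ ∅) for two independent lazy walks started at the same vertex. -/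

import Mathlib

open Finset

variable {V : Type*} [Fintype V] [DecidableEq V] [Nonempty V]

/-- One-step transition kernel of the lazy random walk on `G`:
stay put with probability `1/2`, otherwise move to a uniformly chosen neighbour. -/
noncomputable def lazyStep (G : SimpleGraph V) [DecidableRel G.Adj] (x y : V) : ℝ :=
  if x = y then 1 / 2 else if G.Adj x y then 1 / (2 * (G.degree x : ℝ)) else 0

/-- `n`-step transition probabilities of the lazy random walk. -/
noncomputable def lazyProb (G : SimpleGraph V) [DecidableRel G.Adj] : ℕ → V → V → ℝ
  | 0, x, y => if x = y then 1 else 0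
  | n + 1, x, y => ∑ z : V, lazyStep G x z * lazyProb G n z y

/-- The stationary (degree-biased) distribution `π(x) = deg(x)/(2#E)`. -/
noncomputable def statDist (G : SimpleGraph V) [DecidableRel G.Adj] (x : V) : ℝ :=
  (G.degree x : ℝ) / (2 * (G.edgeFinset.card : ℝ))

/-- The uniform `(ℓ∞, 1/4)` mixing time. -/
noncomputable def tmix (G : SimpleGraph V) [DecidableRel G.Adj] : ℕ :=
  sInf {n : ℕ | ∀ x y : V, |lazyProb G n x y / statDist G y - 1| ≤ 1 / 4}

/-- Extension of a finite path to all of `ℕ` (constant after time `N`). -/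
def extPath (N : ℕ) (γ : Fin (N + 1) → V) : ℕ → V :=
  fun n => γ ⟨min n N, Nat.lt_succ_of_le (min_le_right n N)⟩

/-- Weight of a finite path under the lazy random walk kernel. -/
noncomputable def pathWeight (G : SimpleGraph V) [DecidableRel G.Adj]
    (N : ℕ) (γ : Fin (N + 1) → V) : ℝ :=
  ∏ i ∈ Finset.range N, lazyStep G (extPath N γ i) (extPath N γ (i + 1))

open Classical in
/-- Probability, for the lazy random walk started at `ρ`, of a path event
depending only on the first `N+1` coordinates. -/
noncomputable def walkProb (G : SimpleGraph V) [DecidableRel G.Adj]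
    (ρ : V) (N : ℕ) (E : (ℕ → V) → Prop) : ℝ :=
  ∑ γ : Fin (N + 1) → V,
    if extPath N γ 0 = ρ ∧ E (extPath N γ) then pathWeight G N γ else 0

open Classical in
/-- Expectation, for the lazy random walk started at `ρ`, of a path functional
depending only on the first `N+1` coordinates. -/
noncomputable def walkExp (G : SimpleGraph V) [DecidableRel G.Adj]
    (ρ : V) (N : ℕ) (f : (ℕ → V) → ℝ) : ℝ :=
  ∑ γ : Fin (N + 1) → V,
    if extPath N γ 0 = ρ then pathWeight G N γ * f (extPath N γ) else 0

open Classical in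
/-- Probability of a path event for the lazy random walk started from `π`. -/
noncomputable def walkProbStat (G : SimpleGraph V) [DecidableRel G.Adj]
    (N : ℕ) (E : (ℕ → V) → Prop) : ℝ :=
  ∑ γ : Fin (N + 1) → V,
    if E (extPath N γ) then statDist G (extPath N γ 0) * pathWeight G N γ else 0

/-- Expectation of a path functional for the lazy random walk started from `π`. -/
noncomputable def walkExpStat (G : SimpleGraph V) [DecidableRel G.Adj]
    (N : ℕ) (f : (ℕ → V) → ℝ) : ℝ :=
  ∑ γ : Fin (N + 1) → V,
    statDist G (extPath N γ 0) * pathWeight G N γ * f (extPath N γ)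

open Classical in
/-- Probability of a joint event for two independent lazy random walks,
each started from the stationary distribution. -/
noncomputable def twoWalkProbStat (G : SimpleGraph V) [DecidableRel G.Adj]
    (N : ℕ) (E : (ℕ → V) → (ℕ → V) → Prop) : ℝ :=
  ∑ γ₁ : Fin (N + 1) → V, ∑ γ₂ : Fin (N + 1) → V,
    if E (extPath N γ₁) (extPath N γ₂) then
      (statDist G (extPath N γ₁ 0) * pathWeight G N γ₁) *
      (statDist G (extPath N γ₂ 0) * pathWeight G N γ₂) else 0

open Classical in
/-- Probability of a joint event for two independent lazy random walks,
both started at the vertex `ρ`. -/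
noncomputable def twoWalkProbFrom (G : SimpleGraph V) [DecidableRel G.Adj]
    (ρ : V) (N : ℕ) (E : (ℕ → V) → (ℕ → V) → Prop) : ℝ :=
  ∑ γ₁ : Fin (N + 1) → V, ∑ γ₂ : Fin (N + 1) → V,
    if extPath N γ₁ 0 = ρ ∧ extPath N γ₂ 0 = ρ ∧ E (extPath N γ₁) (extPath N γ₂) then
      pathWeight G N γ₁ * pathWeight G N γ₂ else 0

/-- Range of a path over a finite set of times. -/
def walkRange (w : ℕ → V) (A : Finset ℕ) : Finset V := A.image w

/-- `q̄^G(s)`: averaged intersection probability of two independent lazy walks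
started at the same (uniform) vertex. -/
noncomputable def qbar (G : SimpleGraph V) [DecidableRel G.Adj] (s : ℕ) : ℝ :=
  (1 / (Fintype.card V : ℝ)) * ∑ ρ : V,
    twoWalkProbFrom G ρ s (fun w₁ w₂ =>
      (walkRange w₁ (Finset.Icc 0 s) ∩ walkRange w₂ (Finset.Icc 1 s)).Nonempty)

/-- `H^W_ρ(m) = Σ_{i=0}^m Σ_{j=0}^m P_ρ(W(i+j)=ρ)`. -/
noncomputable def HW (G : SimpleGraph V) [DecidableRel G.Adj] (ρ : V) (m : ℕ) : ℝ :=
  ∑ i ∈ Finset.range (m + 1), ∑ j ∈ Finset.range (m + 1), lazyProb G (i + j) ρ ρ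

namespace LC
open Finset

variable {V : Type*} [Fintype V] [DecidableEq V] [Nonempty V]
variable {G : SimpleGraph V} [DecidableRel G.Adj] {d : ℕ}

lemma lazyStep_nonneg (x y : V) : 0 ≤ lazyStep G x y := by
  unfold lazyStep; split_ifs <;> positivity

lemma lazyStep_apply (hreg : G.IsRegularOfDegree d) (x y : V) :
    lazyStep G x y = (if x = y then (1:ℝ)/2 else 0) +
      (if G.Adj x y then 1/(2*(d:ℝ)) else 0) := by
  unfold lazyStep
  rcases eq_or_ne x y with rfl | hxy
  · simp [SimpleGraph.irrefl]
  · simp [hxy, hreg x]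

lemma lazyStep_symm (hreg : G.IsRegularOfDegree d) (x y : V) :
    lazyStep G x y = lazyStep G y x := by
  rw [lazyStep_apply hreg, lazyStep_apply hreg]
  congr 1
  · simp [eq_comm]
  · congr 1; simp [G.adj_comm]

lemma lazyStep_sum (hd : 0 < d) (hreg : G.IsRegularOfDegree d) (x : V) :
    ∑ y : V, lazyStep G x y = 1 := by
  have h1 : ∑ y : V, (if x = y then (1:ℝ)/2 else 0) = 1/2 := by
    rw [Finset.sum_ite_eq]; simp
  have h2 : ∑ y : V, (if G.Adj x y then 1/(2*(d:ℝ)) else 0) = 1/2 := by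
    rw [Finset.sum_ite, Finset.sum_const_zero, add_zero, Finset.sum_const]
    have : (Finset.univ.filter (fun y => G.Adj x y)).card = d := by
      rw [← hreg x, SimpleGraph.degree, SimpleGraph.neighborFinset_eq_filter]
    rw [this]
    have hd' : (d:ℝ) ≠ 0 := Nat.cast_ne_zero.mpr hd.ne'
    field_simp
    ring
    exact mul_inv_cancel₀ hd'
  simp only [lazyStep_apply hreg, Finset.sum_add_distrib, h1, h2]
  norm_num

lemma lazyStep_sum' (hd : 0 < d) (hreg : G.IsRegularOfDegree d) (y : V) :
    ∑ x : V, lazyStep G x y = 1 := by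
  simp_rw [fun x => lazyStep_symm hreg x y]
  exact lazyStep_sum hd hreg y

lemma lazyProb_nonneg (t : ℕ) (x y : V) : 0 ≤ lazyProb G t x y := by
  induction t generalizing x y with
  | zero => unfold lazyProb; split_ifs <;> norm_num
  | succ n ih =>
    unfold lazyProb
    exact Finset.sum_nonneg fun z _ => mul_nonneg (lazyStep_nonneg _ _) (ih _ _)

lemma lazyProb_sum (hd : 0 < d) (hreg : G.IsRegularOfDegree d) (t : ℕ) (x : V) :
    ∑ y : V, lazyProb G t x y = 1 := by
  induction t generalizing x with
  | zero => simp [lazyProb]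
  | succ n ih =>
    unfold lazyProb
    rw [Finset.sum_comm]
    calc ∑ z : V, ∑ y : V, lazyStep G x z * lazyProb G n z y
        = ∑ z : V, lazyStep G x z * ∑ y : V, lazyProb G n z y := by
          simp [Finset.mul_sum]
      _ = 1 := by simp_rw [ih]; simpa using lazyStep_sum hd hreg x

lemma lazyProb_add (a b : ℕ) (x y : V) :
    lazyProb G (a + b) x y = ∑ z : V, lazyProb G a x z * lazyProb G b z y := by
  induction a generalizing x with
  | zero =>
    rw [Nat.zero_add]
    simp [lazyProb, Finset.sum_ite_eq]
  | succ n ih =>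
    have h : n + 1 + b = (n + b) + 1 := by omega
    rw [h]
    have hL : lazyProb G ((n+b)+1) x y = ∑ w : V, lazyStep G x w * lazyProb G (n+b) w y := rfl
    have hR : ∀ z, lazyProb G (n+1) x z = ∑ w : V, lazyStep G x w * lazyProb G n w z :=
      fun z => rfl
    rw [hL]
    simp_rw [ih, Finset.mul_sum, hR, Finset.sum_mul]
    rw [Finset.sum_comm]
    congr 1; funext z; congr 1; funext w; ring

lemma lazyProb_one (x y : V) : lazyProb G 1 x y = lazyStep G x y := by
  show ∑ z : V, lazyStep G x z * lazyProb G 0 z y = _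
  simp [lazyProb, Finset.sum_ite_eq', mul_comm]

lemma lazyProb_symm (hreg : G.IsRegularOfDegree d) (t : ℕ) (x y : V) :
    lazyProb G t x y = lazyProb G t y x := by
  induction t generalizing x y with
  | zero => simp [lazyProb, eq_comm]
  | succ n ih =>
    have h1 : lazyProb G (n+1) x y = ∑ z : V, lazyProb G n x z * lazyStep G z y := by
      have := lazyProb_add (G := G) n 1 x y
      simpa [lazyProb_one] using this
    rw [h1]
    show _ = ∑ z : V, lazyStep G y z * lazyProb G n z x
    congr 1; funext z
    rw [ih x z, lazyStep_symm hreg z y, mul_comm]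

lemma lazyProb_sum_left (hd : 0 < d) (hreg : G.IsRegularOfDegree d) (t : ℕ) (y : V) :
    ∑ x : V, lazyProb G t x y = 1 := by
  simp_rw [fun x => lazyProb_symm hreg t x y]
  exact lazyProb_sum hd hreg t y

end LC
namespace LC2
open Finset LC

variable {V : Type*} [Fintype V] [DecidableEq V] [Nonempty V]
variable {G : SimpleGraph V} [DecidableRel G.Adj] {d : ℕ}

/-- Lower bound along a walk. -/
lemma lazyProb_walk_le (hd : 0 < d) (hreg : G.IsRegularOfDegree d) {x y : V}
    (p : G.Walk x y) {t : ℕ} (ht : p.length ≤ t) :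
    (1/(2*(d:ℝ)))^t ≤ lazyProb G t x y := by
  have hstep_self : ∀ z : V, (1/(2*(d:ℝ))) ≤ lazyStep G z z := by
    intro z
    have : (1:ℝ) ≤ (d:ℝ) := by exact_mod_cast hd
    unfold lazyStep
    rw [if_pos rfl]
    have h2 : (2:ℝ) ≤ 2*(d:ℝ) := by linarith
    calc 1/(2*(d:ℝ)) ≤ 1/2 := one_div_le_one_div_of_le (by norm_num) h2
      _ = _ := rfl
  have hstep_adj : ∀ z w : V, G.Adj z w → (1/(2*(d:ℝ))) ≤ lazyStep G z w := by
    intro z w hzw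
    unfold lazyStep
    rw [if_neg hzw.ne, if_pos hzw, hreg z]
  induction t generalizing x y p with
  | zero =>
    have : p.length = 0 := Nat.le_zero.mp ht
    have hxy : x = y := (SimpleGraph.Walk.eq_of_length_eq_zero this)
    subst hxy
    simp [lazyProb]
  | succ n ih =>
    have key : ∀ z : V, (1/(2*(d:ℝ))) ≤ lazyStep G x z →
        (1/(2*(d:ℝ)))^n ≤ lazyProb G n z y →
        (1/(2*(d:ℝ)))^(n+1) ≤ lazyProb G (n+1) x y := by
      intro z h1 h2
      have : lazyStep G x z * lazyProb G n z y ≤ lazyProb G (n+1) x y := by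
        show _ ≤ ∑ w : V, lazyStep G x w * lazyProb G n w y
        exact Finset.single_le_sum (f := fun w => lazyStep G x w * lazyProb G n w y)
          (fun w _ => mul_nonneg (lazyStep_nonneg _ _) (lazyProb_nonneg _ _ _))
          (Finset.mem_univ z)
      calc (1/(2*(d:ℝ)))^(n+1) = (1/(2*(d:ℝ))) * (1/(2*(d:ℝ)))^n := by ring
        _ ≤ lazyStep G x z * lazyProb G n z y := by
            apply mul_le_mul h1 h2 (by positivity)
              (le_trans (by positivity) h1)
        _ ≤ _ := this
    cases p with
    | nil => exact key x (hstep_self x) (ih SimpleGraph.Walk.nil (Nat.zero_le n))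
    | cons hadj q =>
      refine key _ (hstep_adj _ _ hadj) (ih q ?_)
      simpa [SimpleGraph.Walk.length_cons] using ht

/-- A uniform positivity time exists. -/
lemma exists_unif_pos (hconn : G.Connected) (hd : 0 < d) (hreg : G.IsRegularOfDegree d) :
    ∃ T : ℕ, ∀ x y : V, (1/(2*(d:ℝ)))^T ≤ lazyProb G T x y := by
  classical
  have hw : ∀ x y : V, Nonempty (G.Walk x y) := fun x y => (hconn x y)
  let T : ℕ := Finset.univ.sup (fun p : V × V => (hw p.1 p.2).some.length)
  refine ⟨T, fun x y => ?_⟩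
  have hle : (hw x y).some.length ≤ T :=
    Finset.le_sup (f := fun p : V × V => (hw p.1 p.2).some.length) (Finset.mem_univ (x, y))
  exact lazyProb_walk_le hd hreg (hw x y).some hle

lemma conv_step (hd : 0 < d) (hreg : G.IsRegularOfDegree d) {c : ℝ} {t : ℕ} {y : V}
    (hc : ∀ z : V, |lazyProb G t z y - 1/(Fintype.card V : ℝ)| ≤ c) (a : ℕ) (x : V) :
    |lazyProb G (a + t) x y - 1/(Fintype.card V : ℝ)| ≤ c := by
  have h0 : lazyProb G (a+t) x y - 1/(Fintype.card V : ℝ)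
      = ∑ z : V, lazyProb G a x z * (lazyProb G t z y - 1/(Fintype.card V : ℝ)) := by
    rw [lazyProb_add]
    simp only [mul_sub]
    rw [Finset.sum_sub_distrib, ← Finset.sum_mul, lazyProb_sum hd hreg, one_mul]
  rw [h0]
  calc |∑ z : V, lazyProb G a x z * (lazyProb G t z y - 1/(Fintype.card V : ℝ))|
      ≤ ∑ z : V, |lazyProb G a x z * (lazyProb G t z y - 1/(Fintype.card V : ℝ))| :=
        Finset.abs_sum_le_sum_abs _ _
    _ ≤ ∑ z : V, lazyProb G a x z * c := by
        refine Finset.sum_le_sum fun z _ => ?_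
        rw [abs_mul, abs_of_nonneg (lazyProb_nonneg _ _ _)]
        exact mul_le_mul_of_nonneg_left (hc z) (lazyProb_nonneg _ _ _)
    _ = c := by rw [← Finset.sum_mul, lazyProb_sum hd hreg, one_mul]

end LC2
namespace LC2
open Finset LC

variable {V : Type*} [Fintype V] [DecidableEq V] [Nonempty V]
variable {G : SimpleGraph V} [DecidableRel G.Adj] {d : ℕ}

lemma card_pos' : 0 < (Fintype.card V : ℝ) := by
  exact_mod_cast Fintype.card_pos

lemma doeblin (hd : 0 < d) (hreg : G.IsRegularOfDegree d) {T : ℕ} {δ : ℝ}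
    (hδ : 0 < δ) (hT : ∀ x y : V, δ ≤ lazyProb G T x y) (j : ℕ) (x y : V) :
    |lazyProb G (j * T) x y - 1/(Fintype.card V : ℝ)| ≤ (1 - (Fintype.card V : ℝ) * δ)^j := by
  set n : ℝ := (Fintype.card V : ℝ) with hn
  have hnpos : 0 < n := card_pos'
  have hnδ : n * δ ≤ 1 := by
    obtain ⟨x₀⟩ := ‹Nonempty V›
    have : ∑ y : V, δ ≤ ∑ y : V, lazyProb G T x₀ y :=
      Finset.sum_le_sum fun y _ => hT x₀ y
    rw [lazyProb_sum hd hreg, Finset.sum_const, Finset.card_univ, nsmul_eq_mul] at this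
    exact this
  induction j generalizing x y with
  | zero =>
    simp only [Nat.zero_mul, pow_zero]
    have h1n : 1/n ≤ 1 := by
      rw [div_le_one hnpos, hn]
      exact_mod_cast Nat.one_le_iff_ne_zero.mpr Fintype.card_ne_zero
    have h1n' : 0 < 1/n := by positivity
    show |lazyProb G 0 x y - 1/n| ≤ 1
    unfold lazyProb
    split_ifs <;> rw [abs_le] <;> constructor <;> linarith
  | succ j ih =>
    have hTj : j * T + T = (j+1) * T := by ring
    rw [← hTj, Nat.add_comm]
    have hid : lazyProb G (T + j*T) x y - 1/n
        = ∑ z : V, (lazyProb G T x z - δ) * (lazyProb G (j*T) z y - 1/n) := by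
      have e1 : ∑ z : V, (lazyProb G T x z - δ) * (lazyProb G (j*T) z y - 1/n)
          = ∑ z : V, (lazyProb G T x z * lazyProb G (j*T) z y
              - lazyProb G T x z * (1/n) - δ * lazyProb G (j*T) z y + δ * (1/n)) := by
        congr 1; funext z; ring
      rw [e1]
      simp only [Finset.sum_add_distrib, Finset.sum_sub_distrib]
      rw [← lazyProb_add, ← Finset.sum_mul, ← Finset.mul_sum,
        lazyProb_sum hd hreg, lazyProb_sum_left hd hreg, Finset.sum_const,
        Finset.card_univ, nsmul_eq_mul]
      have hn0 : n ≠ 0 := ne_of_gt hnpos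
      field_simp
      ring
    rw [hid]
    calc |∑ z : V, (lazyProb G T x z - δ) * (lazyProb G (j*T) z y - 1/n)|
        ≤ ∑ z : V, |(lazyProb G T x z - δ) * (lazyProb G (j*T) z y - 1/n)| :=
          Finset.abs_sum_le_sum_abs _ _
      _ ≤ ∑ z : V, (lazyProb G T x z - δ) * (1 - n*δ)^j := by
          refine Finset.sum_le_sum fun z _ => ?_
          rw [abs_mul, abs_of_nonneg (by linarith [hT x z])]
          exact mul_le_mul_of_nonneg_left (ih z y) (by linarith [hT x z])
      _ = (1 - n*δ) * (1 - n*δ)^j := by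
          rw [← Finset.sum_mul, Finset.sum_sub_distrib, lazyProb_sum hd hreg,
            Finset.sum_const, Finset.card_univ, nsmul_eq_mul]
      _ = (1 - n*δ)^(j+1) := by ring

lemma statDist_eq (hd : 0 < d) (hreg : G.IsRegularOfDegree d) (y : V) :
    statDist G y = 1/(Fintype.card V : ℝ) := by
  have h2E : 2 * G.edgeFinset.card = Fintype.card V * d := by
    rw [← G.sum_degrees_eq_twice_card_edges]
    simp [hreg _, Finset.sum_const, Finset.card_univ, mul_comm]
  unfold statDist
  rw [hreg y]
  have : (2 * (G.edgeFinset.card : ℝ)) = (Fintype.card V : ℝ) * d := by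
    exact_mod_cast congrArg (Nat.cast : ℕ → ℝ) h2E
  rw [this]
  have hd0 : (d:ℝ) ≠ 0 := Nat.cast_ne_zero.mpr hd.ne'
  have hn0 : (Fintype.card V : ℝ) ≠ 0 := ne_of_gt card_pos'
  field_simp
  try ring

lemma cond_iff (hd : 0 < d) (hreg : G.IsRegularOfDegree d) (t : ℕ) :
    (∀ x y : V, |lazyProb G t x y / statDist G y - 1| ≤ 1/4) ↔
    (∀ x y : V, |lazyProb G t x y - 1/(Fintype.card V : ℝ)| ≤ 1/(4*(Fintype.card V : ℝ))) := by
  have hnpos : (0:ℝ) < (Fintype.card V : ℝ) := card_pos'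
  have hn0 : (Fintype.card V : ℝ) ≠ 0 := ne_of_gt hnpos
  have key : ∀ x y : V, lazyProb G t x y / statDist G y - 1
      = (Fintype.card V : ℝ) * (lazyProb G t x y - 1/(Fintype.card V : ℝ)) := by
    intro x y
    rw [statDist_eq hd hreg]
    field_simp
  constructor <;> intro h x y
  · have := h x y
    rw [key, abs_mul, abs_of_pos hnpos] at this
    rw [show (1:ℝ)/(4*(Fintype.card V:ℝ)) = (1/4)/(Fintype.card V:ℝ) by ring,
      le_div_iff₀ hnpos]
    linarith
  · have := h x y
    rw [key, abs_mul, abs_of_pos hnpos]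
    rw [show (1:ℝ)/(4*(Fintype.card V:ℝ)) = (1/4)/(Fintype.card V:ℝ) by ring,
      le_div_iff₀ hnpos] at this
    linarith

lemma tmix_mem (hconn : G.Connected) (hd : 0 < d) (hreg : G.IsRegularOfDegree d) :
    ∀ x y : V, |lazyProb G (tmix G) x y - 1/(Fintype.card V : ℝ)|
      ≤ 1/(4*(Fintype.card V : ℝ)) := by
  set n : ℝ := (Fintype.card V : ℝ) with hn
  have hnpos : 0 < n := card_pos'
  have hne : {t : ℕ | ∀ x y : V, |lazyProb G t x y / statDist G y - 1| ≤ 1/4}.Nonempty := by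
    obtain ⟨T, hT⟩ := exists_unif_pos hconn hd hreg
    set δ : ℝ := (1/(2*(d:ℝ)))^T with hδdef
    have hδ : 0 < δ := by positivity
    have hnδ1 : 1 - n * δ < 1 := by nlinarith
    obtain ⟨j, hj⟩ := exists_pow_lt_of_lt_one (x := 1/(4*n)) (by positivity) hnδ1
    refine ⟨j * T, ?_⟩
    simp only [Set.mem_setOf_eq]
    rw [cond_iff hd hreg]
    intro x y
    exact le_trans (doeblin hd hreg hδ hT j x y) hj.le
  have := Nat.sInf_mem hne
  rw [tmix]
  exact (cond_iff hd hreg _).mp this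

lemma submult (hd : 0 < d) (hreg : G.IsRegularOfDegree d) {a b : ℝ} {s t : ℕ}
    (ha : ∀ x y : V, |lazyProb G s x y - 1/(Fintype.card V : ℝ)| ≤ a/(Fintype.card V : ℝ))
    (hb : ∀ x y : V, |lazyProb G t x y - 1/(Fintype.card V : ℝ)| ≤ b/(Fintype.card V : ℝ)) :
    ∀ x y : V, |lazyProb G (s+t) x y - 1/(Fintype.card V : ℝ)|
      ≤ a*b/(Fintype.card V : ℝ) := by
  set n : ℝ := (Fintype.card V : ℝ) with hn
  have hnpos : 0 < n := card_pos'
  have hn0 : n ≠ 0 := ne_of_gt hnpos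
  have ha' : 0 ≤ a/n := le_trans (abs_nonneg _) (ha Classical.ofNonempty Classical.ofNonempty)
  intro x y
  have hid : lazyProb G (s+t) x y - 1/n
      = ∑ z : V, (lazyProb G s x z - 1/n) * (lazyProb G t z y - 1/n) := by
    have e1 : ∑ z : V, (lazyProb G s x z - 1/n) * (lazyProb G t z y - 1/n)
        = ∑ z : V, (lazyProb G s x z * lazyProb G t z y
            - lazyProb G s x z * (1/n) - (1/n) * lazyProb G t z y + (1/n) * (1/n)) := by
      congr 1; funext z; ring
    rw [e1]
    simp only [Finset.sum_add_distrib, Finset.sum_sub_distrib]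
    rw [← lazyProb_add, ← Finset.sum_mul, ← Finset.mul_sum,
      lazyProb_sum hd hreg, lazyProb_sum_left hd hreg, Finset.sum_const,
      Finset.card_univ, nsmul_eq_mul]
    field_simp
    try ring
  rw [hid]
  calc |∑ z : V, (lazyProb G s x z - 1/n) * (lazyProb G t z y - 1/n)|
      ≤ ∑ z : V, |(lazyProb G s x z - 1/n)| * |(lazyProb G t z y - 1/n)| := by
        refine le_trans (Finset.abs_sum_le_sum_abs _ _) ?_
        refine Finset.sum_le_sum fun z _ => ?_
        rw [abs_mul]
    _ ≤ ∑ z : V, (a/n) * (b/n) := by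
        refine Finset.sum_le_sum fun z _ => ?_
        exact mul_le_mul (ha x z) (hb z y) (abs_nonneg _) ha'
    _ = n * ((a/n) * (b/n)) := by
        rw [Finset.sum_const, Finset.card_univ, nsmul_eq_mul]
    _ = a*b/n := by field_simp

lemma mix_pow (hconn : G.Connected) (hd : 0 < d) (hreg : G.IsRegularOfDegree d)
    {q : ℕ} (hq : 1 ≤ q) :
    ∀ x y : V, |lazyProb G (q * tmix G) x y - 1/(Fintype.card V : ℝ)|
      ≤ ((1:ℝ)/4)^q/(Fintype.card V : ℝ) := by
  induction q with
  | zero => omega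
  | succ q ih =>
    rcases Nat.eq_or_lt_of_le hq with hq1 | hq2
    · intro x y
      have h := tmix_mem hconn hd hreg x y
      rw [← hq1, pow_one, Nat.one_mul]
      have e : ((1:ℝ)/4)/(Fintype.card V : ℝ) = 1/(4*(Fintype.card V : ℝ)) := by ring
      rw [e]
      exact h
    · have hq' : 1 ≤ q := by omega
      have heq : (q+1) * tmix G = tmix G + q * tmix G := by ring
      have step := submult hd hreg (a := 1/4) (b := (1/4:ℝ)^q)
        (fun x y => by
          have h := tmix_mem hconn hd hreg x y
          have e : (1:ℝ)/(4*(Fintype.card V:ℝ)) = (1/4)/(Fintype.card V:ℝ) := by ring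
          rwa [e] at h) (ih hq')
      intro x y
      rw [heq]
      calc |lazyProb G (tmix G + q * tmix G) x y - 1/(Fintype.card V : ℝ)|
          ≤ (1/4) * (1/4:ℝ)^q / (Fintype.card V : ℝ) := step x y
        _ = ((1:ℝ)/4)^(q+1)/(Fintype.card V : ℝ) := by ring

/-- Key mixing estimate. -/
lemma mixing_bound (hconn : G.Connected) (hd : 0 < d) (hreg : G.IsRegularOfDegree d)
    (q t : ℕ) (hqt : q * tmix G ≤ t) (x : V) (g : V → ℝ)
    (hg0 : ∀ y, 0 ≤ g y) (hg1 : ∀ y, g y ≤ 1) :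
    ∑ y : V, lazyProb G t x y * g y
      ≤ (∑ y : V, (1/(Fintype.card V : ℝ)) * g y) + ((1:ℝ)/4)^q := by
  set n : ℝ := (Fintype.card V : ℝ) with hn
  have hnpos : 0 < n := card_pos'
  rcases Nat.eq_zero_or_pos q with rfl | hq
  · have h1 : ∑ y : V, lazyProb G t x y * g y ≤ ∑ y : V, lazyProb G t x y := by
      refine Finset.sum_le_sum fun y _ => ?_
      nlinarith [lazyProb_nonneg (G := G) t x y, hg0 y, hg1 y]
    have h2 : (0:ℝ) ≤ ∑ y : V, (1/n) * g y :=
      Finset.sum_nonneg fun y _ => mul_nonneg (by positivity) (hg0 y)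
    rw [lazyProb_sum hd hreg] at h1
    rw [pow_zero]
    linarith
  · have hb : ∀ y : V, lazyProb G t x y ≤ 1/n + ((1:ℝ)/4)^q/n := by
      intro y
      have h1 : ∀ z : V, |lazyProb G (q * tmix G) z y - 1/n| ≤ ((1:ℝ)/4)^q/n :=
        fun z => mix_pow hconn hd hreg hq z y
      have h2 := conv_step hd hreg h1 (t - q * tmix G) x
      rw [Nat.sub_add_cancel hqt] at h2
      have := abs_le.mp h2
      linarith [this.2]
    calc ∑ y : V, lazyProb G t x y * g y
        ≤ ∑ y : V, (1/n + ((1:ℝ)/4)^q/n) * g y := by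
          refine Finset.sum_le_sum fun y _ => ?_
          exact mul_le_mul_of_nonneg_right (hb y) (hg0 y)
      _ = (∑ y : V, (1/n) * g y) + (((1:ℝ)/4)^q/n) * ∑ y : V, g y := by
          simp [add_mul, Finset.sum_add_distrib, Finset.mul_sum]
      _ ≤ (∑ y : V, (1/n) * g y) + ((1:ℝ)/4)^q := by
          have hsg : ∑ y : V, g y ≤ n := by
            calc ∑ y : V, g y ≤ ∑ y : V, 1 := Finset.sum_le_sum fun y _ => hg1 y
              _ = n := by simp [hn]
          have h4 : (0:ℝ) ≤ ((1:ℝ)/4)^q := by positivity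
          have : (((1:ℝ)/4)^q/n) * ∑ y : V, g y ≤ (((1:ℝ)/4)^q/n) * n :=
            mul_le_mul_of_nonneg_left hsg (by positivity)
          have hn0 : n ≠ 0 := ne_of_gt hnpos
          rw [div_mul_cancel₀ _ hn0] at this
          linarith

end LC2
namespace LC3
open Finset LC LC2

variable {V : Type*} [Fintype V] [DecidableEq V] [Nonempty V]
variable {G : SimpleGraph V} [DecidableRel G.Adj] {d : ℕ}

/-- Prepend a value to a sequence. -/
def prepend (x : V) (u : ℕ → V) : ℕ → V := fun n => match n with
  | 0 => x
  | m+1 => u m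

@[simp] lemma prepend_zero (x : V) (u : ℕ → V) : prepend x u 0 = x := rfl
@[simp] lemma prepend_succ (x : V) (u : ℕ → V) (m : ℕ) : prepend x u (m+1) = u m := rfl

/-- An event depends only on coordinates `≤ T`. -/
def DepOn (A : (ℕ → V) → Prop) (T : ℕ) : Prop :=
  ∀ w w' : ℕ → V, (∀ i, i ≤ T → w i = w' i) → (A w ↔ A w')

open Classical in
/-- Probability of an event together with the endpoint being `y`. -/
noncomputable def wpe (G : SimpleGraph V) [DecidableRel G.Adj]
    (ρ : V) (T : ℕ) (A : (ℕ → V) → Prop) (y : V) : ℝ :=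
  ∑ γ : Fin (T + 1) → V,
    if γ 0 = ρ ∧ A (extPath T γ) ∧ γ (Fin.last T) = y then pathWeight G T γ else 0

lemma extPath_le (N : ℕ) (γ : Fin (N+1) → V) (i : ℕ) (h : i ≤ N) :
    extPath N γ i = γ ⟨i, Nat.lt_succ_of_le h⟩ := by
  simp only [extPath]
  congr 1
  exact Fin.ext (by simpa using Nat.min_eq_left h)

@[simp] lemma extPath_zero' (N : ℕ) (γ : Fin (N+1) → V) : extPath N γ 0 = γ 0 := by
  rw [extPath_le N γ 0 (Nat.zero_le N)]
  congr 1

lemma extPath_zero_fun (γ : Fin 1 → V) : extPath 0 γ = fun _ => γ 0 := by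
  funext n
  simp only [extPath]
  congr 1
  exact Fin.ext (by simp)

lemma extPath_cons (L : ℕ) (v : V) (γ' : Fin (L+1) → V) :
    extPath (L+1) (Fin.cons v γ') = prepend v (extPath L γ') := by
  funext n
  cases n with
  | zero => simp [extPath]
  | succ m =>
    show extPath (L+1) (Fin.cons v γ') (m+1) = extPath L γ' m
    simp only [extPath]
    have h : min (m+1) (L+1) = (min m L) + 1 := Nat.succ_min_succ m L
    have : (⟨min (m+1) (L+1), Nat.lt_succ_of_le (min_le_right _ _)⟩ : Fin (L+2))
        = Fin.succ ⟨min m L, Nat.lt_succ_of_le (min_le_right _ _)⟩ := by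
      apply Fin.ext; simp [h]
    rw [this, Fin.cons_succ]

lemma pathWeight_nonneg (L : ℕ) (γ : Fin (L+1) → V) : 0 ≤ pathWeight G L γ :=
  Finset.prod_nonneg fun i _ => lazyStep_nonneg _ _

lemma pathWeight_cons (L : ℕ) (v : V) (γ' : Fin (L+1) → V) :
    pathWeight G (L+1) (Fin.cons v γ') = lazyStep G v (γ' 0) * pathWeight G L γ' := by
  unfold pathWeight
  rw [Finset.prod_range_succ']
  rw [extPath_cons]
  simp only [prepend_succ, prepend_zero]
  rw [mul_comm]
  congr 1

/-- Splitting a sum over paths by the first coordinate. -/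
lemma sum_cons (L : ℕ) (f : (Fin (L+2) → V) → ℝ) :
    ∑ γ : Fin (L+2) → V, f γ = ∑ v : V, ∑ γ' : Fin (L+1) → V, f (Fin.cons v γ') := by
  have h1 : ∑ γ : Fin (L+2) → V, f γ
      = ∑ p : V × (Fin (L+1) → V), f (Fin.cons p.1 p.2) :=
    (Fintype.sum_equiv (Fin.consEquiv (fun _ : Fin (L+2) => V))
      (fun p => f (Fin.cons p.1 p.2)) f (fun p => rfl)).symm
  rw [h1, Fintype.sum_prod_type]

lemma sum_fin_one (f : (Fin 1 → V) → ℝ) :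
    ∑ γ : Fin 1 → V, f γ = ∑ x : V, f (fun _ => x) := by
  refine (Fintype.sum_equiv (Equiv.funUnique (Fin 1) V).symm
    (fun x => f (fun _ => x)) f (fun x => ?_)).symm
  congr 1

lemma walkProb_succ (ρ : V) (L : ℕ) (E : (ℕ → V) → Prop) :
    walkProb G ρ (L+1) E
      = ∑ v : V, lazyStep G ρ v * walkProb G v L (fun u => E (prepend ρ u)) := by
  classical
  have hL : walkProb G ρ (L+1) E
      = ∑ γ' : Fin (L+1) → V, (if E (prepend ρ (extPath L γ'))
          then lazyStep G ρ (γ' 0) * pathWeight G L γ' else 0) := by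
    unfold walkProb
    rw [sum_cons]
    have lhs_eq : ∀ v : V, ∀ γ' : Fin (L+1) → V,
        (if extPath (L+1) (Fin.cons v γ') 0 = ρ ∧ E (extPath (L+1) (Fin.cons v γ'))
          then pathWeight G (L+1) (Fin.cons v γ') else 0)
        = if v = ρ then (if E (prepend v (extPath L γ'))
            then lazyStep G v (γ' 0) * pathWeight G L γ' else 0) else 0 := by
      intro v γ'
      rw [extPath_cons, pathWeight_cons]
      simp only [extPath_zero', Fin.cons_zero, prepend_zero]
      by_cases h1 : v = ρ <;> by_cases h2 : E (prepend v (extPath L γ')) <;>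
        simp [h1, h2]
    simp only [lhs_eq]
    rw [Finset.sum_comm]
    refine Finset.sum_congr rfl fun γ' _ => ?_
    rw [Finset.sum_ite_eq']
    simp
  have hR : ∑ v : V, lazyStep G ρ v * walkProb G v L (fun u => E (prepend ρ u))
      = ∑ γ' : Fin (L+1) → V, (if E (prepend ρ (extPath L γ'))
          then lazyStep G ρ (γ' 0) * pathWeight G L γ' else 0) := by
    unfold walkProb
    simp only [Finset.mul_sum, mul_ite, mul_zero, extPath_zero']
    rw [Finset.sum_comm]
    refine Finset.sum_congr rfl fun γ' _ => ?_
    by_cases hE : E (prepend ρ (extPath L γ'))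
    · simp only [hE, and_true]
      rw [Finset.sum_ite_eq]
      simp
    · simp [hE]
  rw [hL, hR]

end LC3
namespace LC3
open Finset LC LC2

variable {V : Type*} [Fintype V] [DecidableEq V] [Nonempty V]
variable {G : SimpleGraph V} [DecidableRel G.Adj] {d : ℕ}

lemma wpe_succ (ρ : V) (L : ℕ) (A : (ℕ → V) → Prop) (y : V) :
    wpe G ρ (L+1) A y
      = ∑ v : V, lazyStep G ρ v * wpe G v L (fun u => A (prepend ρ u)) y := by
  classical
  have hlast : ∀ (v : V) (γ' : Fin (L+1) → V),
      (Fin.cons (α := fun _ : Fin (L+2) => V) v γ') (Fin.last (L+1)) = γ' (Fin.last L) := by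
    intro v γ'
    rw [← Fin.succ_last, Fin.cons_succ]
  have hL : wpe G ρ (L+1) A y
      = ∑ γ' : Fin (L+1) → V, (if A (prepend ρ (extPath L γ')) ∧ γ' (Fin.last L) = y
          then lazyStep G ρ (γ' 0) * pathWeight G L γ' else 0) := by
    unfold wpe
    rw [sum_cons]
    have lhs_eq : ∀ v : V, ∀ γ' : Fin (L+1) → V,
        (if (Fin.cons (α := fun _ : Fin (L+2) => V) v γ') 0 = ρ
            ∧ A (extPath (L+1) (Fin.cons v γ'))
            ∧ (Fin.cons (α := fun _ : Fin (L+2) => V) v γ') (Fin.last (L+1)) = y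
          then pathWeight G (L+1) (Fin.cons v γ') else 0)
        = if v = ρ then (if A (prepend v (extPath L γ')) ∧ γ' (Fin.last L) = y
            then lazyStep G v (γ' 0) * pathWeight G L γ' else 0) else 0 := by
      intro v γ'
      rw [extPath_cons, pathWeight_cons, hlast]
      by_cases h1 : v = ρ <;>
        by_cases h2 : A (prepend v (extPath L γ')) ∧ γ' (Fin.last L) = y <;>
        simp [h1, h2, Fin.cons_zero]
    simp only [lhs_eq]
    rw [Finset.sum_comm]
    refine Finset.sum_congr rfl fun γ' _ => ?_
    rw [Finset.sum_ite_eq']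
    simp
  have hR : ∑ v : V, lazyStep G ρ v * wpe G v L (fun u => A (prepend ρ u)) y
      = ∑ γ' : Fin (L+1) → V, (if A (prepend ρ (extPath L γ')) ∧ γ' (Fin.last L) = y
          then lazyStep G ρ (γ' 0) * pathWeight G L γ' else 0) := by
    unfold wpe
    simp only [Finset.mul_sum, mul_ite, mul_zero, extPath_zero']
    rw [Finset.sum_comm]
    refine Finset.sum_congr rfl fun γ' _ => ?_
    by_cases hA : A (prepend ρ (extPath L γ')) ∧ γ' (Fin.last L) = y
    · simp only [hA, and_true]
      rw [Finset.sum_ite_eq]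
      simp
    · simp [hA]
  rw [hL, hR]

open Classical in
lemma walkProb_zero (ρ : V) (E : (ℕ → V) → Prop) :
    walkProb G ρ 0 E = if E (fun _ => ρ) then 1 else 0 := by
  classical
  unfold walkProb
  rw [sum_fin_one]
  have : ∀ x : V, (if extPath 0 (fun _ : Fin 1 => x) 0 = ρ ∧ E (extPath 0 (fun _ : Fin 1 => x))
      then pathWeight G 0 (fun _ : Fin 1 => x) else 0)
      = if x = ρ then (if E (fun _ => x) then 1 else 0) else 0 := by
    intro x
    rw [extPath_zero_fun]
    have hw : pathWeight G 0 (fun _ : Fin 1 => x) = 1 := by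
      unfold pathWeight; simp
    rw [hw]
    by_cases h1 : x = ρ <;> by_cases h2 : E (fun _ => x) <;> simp [h1, h2]
  simp only [this]
  rw [Finset.sum_ite_eq']
  simp

open Classical in
lemma wpe_zero (ρ : V) (A : (ℕ → V) → Prop) (y : V) :
    wpe G ρ 0 A y = if ρ = y ∧ A (fun _ => ρ) then 1 else 0 := by
  classical
  unfold wpe
  rw [sum_fin_one]
  have : ∀ x : V, (if (fun _ : Fin 1 => x) 0 = ρ ∧ A (extPath 0 (fun _ : Fin 1 => x))
        ∧ (fun _ : Fin 1 => x) (Fin.last 0) = y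
      then pathWeight G 0 (fun _ : Fin 1 => x) else 0)
      = if x = ρ then (if ρ = y ∧ A (fun _ => ρ) then 1 else 0) else 0 := by
    intro x
    rw [extPath_zero_fun]
    have hw : pathWeight G 0 (fun _ : Fin 1 => x) = 1 := by
      unfold pathWeight; simp
    rw [hw]
    by_cases h1 : x = ρ
    · subst h1
      by_cases h2 : x = y ∧ A (fun _ => x) <;> simp [h2] <;> tauto
    · simp [h1]
  simp only [this]
  rw [Finset.sum_ite_eq']
  simp

lemma walkProb_nonneg (ρ : V) (L : ℕ) (E : (ℕ → V) → Prop) :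
    0 ≤ walkProb G ρ L E := by
  refine Finset.sum_nonneg fun γ _ => ?_
  split_ifs
  · exact pathWeight_nonneg _ _
  · exact le_refl 0

lemma wpe_nonneg (ρ : V) (T : ℕ) (A : (ℕ → V) → Prop) (y : V) :
    0 ≤ wpe G ρ T A y := by
  refine Finset.sum_nonneg fun γ _ => ?_
  split_ifs
  · exact pathWeight_nonneg _ _
  · exact le_refl 0

lemma walkProb_congr (ρ : V) (L : ℕ) {E E' : (ℕ → V) → Prop}
    (h : ∀ w, w 0 = ρ → (E w ↔ E' w)) : walkProb G ρ L E = walkProb G ρ L E' := by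
  classical
  unfold walkProb
  refine Finset.sum_congr rfl fun γ _ => ?_
  by_cases h0 : extPath L γ 0 = ρ
  · have hiff := h (extPath L γ) h0
    by_cases hE : E (extPath L γ)
    · rw [if_pos ⟨h0, hE⟩, if_pos ⟨h0, hiff.mp hE⟩]
    · rw [if_neg (fun hc => hE hc.2), if_neg (fun hc => hE (hiff.mpr hc.2))]
  · rw [if_neg (fun hc => h0 hc.1), if_neg (fun hc => h0 hc.1)]

lemma walkProb_mono (ρ : V) (L : ℕ) {E E' : (ℕ → V) → Prop}
    (h : ∀ w, E w → E' w) : walkProb G ρ L E ≤ walkProb G ρ L E' := by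
  classical
  unfold walkProb
  refine Finset.sum_le_sum fun γ _ => ?_
  by_cases h1 : extPath L γ 0 = ρ ∧ E (extPath L γ)
  · rw [if_pos h1, if_pos ⟨h1.1, h _ h1.2⟩]
  · rw [if_neg h1]
    split_ifs
    · exact pathWeight_nonneg _ _
    · exact le_refl 0

lemma walkProb_one (hd : 0 < d) (hreg : G.IsRegularOfDegree d) (ρ : V) (L : ℕ) :
    walkProb G ρ L (fun _ => True) = 1 := by
  induction L generalizing ρ with
  | zero => rw [walkProb_zero]; simp
  | succ n ih =>
    rw [walkProb_succ]
    simp only [ih]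
    simpa using lazyStep_sum hd hreg ρ

lemma wpe_true (ρ : V) (T : ℕ) (y : V) :
    wpe G ρ T (fun _ => True) y = lazyProb G T ρ y := by
  induction T generalizing ρ with
  | zero =>
    rw [wpe_zero]
    show _ = if ρ = y then (1:ℝ) else 0
    simp
  | succ n ih =>
    rw [wpe_succ]
    have hE : (fun u : ℕ → V => (fun _ : ℕ → V => True) (prepend ρ u))
        = (fun _ : ℕ → V => True) := rfl
    show ∑ v : V, lazyStep G ρ v
        * wpe G v n (fun u => (fun _ : ℕ → V => True) (prepend ρ u)) y = _
    simp only [hE, ih]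
    rfl

lemma wpe_sum (ρ : V) (T : ℕ) (A : (ℕ → V) → Prop) :
    ∑ y : V, wpe G ρ T A y = walkProb G ρ T A := by
  classical
  unfold wpe walkProb
  rw [Finset.sum_comm]
  refine Finset.sum_congr rfl fun γ _ => ?_
  have : ∀ y : V, (if γ 0 = ρ ∧ A (extPath T γ) ∧ γ (Fin.last T) = y
      then pathWeight G T γ else 0)
      = if γ (Fin.last T) = y then
          (if extPath T γ 0 = ρ ∧ A (extPath T γ) then pathWeight G T γ else 0) else 0 := by
    intro y
    by_cases h1 : γ (Fin.last T) = y <;>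
      by_cases h2 : γ 0 = ρ ∧ A (extPath T γ) <;>
      simp [h1, h2, extPath_zero'] <;> tauto
  simp only [this]
  rw [Finset.sum_ite_eq]
  simp

end LC3
namespace LC3
open Finset LC LC2

variable {V : Type*} [Fintype V] [DecidableEq V] [Nonempty V]
variable {G : SimpleGraph V} [DecidableRel G.Adj] {d : ℕ}

lemma walkProb_false (ρ : V) (L : ℕ) : walkProb G ρ L (fun _ => False) = 0 := by
  unfold walkProb
  simp

/-- The fundamental splitting (Markov) identity. -/
lemma split (hd : 0 < d) (hreg : G.IsRegularOfDegree d) (ρ : V) (T M : ℕ)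
    (A C : (ℕ → V) → Prop) (hA : DepOn A T) :
    walkProb G ρ (T+M) (fun w => A w ∧ C (fun i => w (T+i)))
      = ∑ y : V, wpe G ρ T A y * walkProb G y M C := by
  classical
  induction T generalizing ρ A with
  | zero =>
    have h0M : 0 + M = M := Nat.zero_add M
    rw [h0M]
    have hev : walkProb G ρ M (fun w => A w ∧ C (fun i => w (0+i)))
        = walkProb G ρ M (fun w => A (fun _ => ρ) ∧ C w) := by
      refine walkProb_congr ρ M fun w h0 => ?_
      have hAw : A w ↔ A (fun _ => ρ) := hA w (fun _ => ρ) (by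
        intro i hi
        interval_cases i
        simpa using h0)
      have hCw : (fun i => w (0+i)) = w := by funext i; rw [Nat.zero_add]
      rw [hCw, hAw]
    rw [hev]
    have hrhs : ∀ y : V, wpe G ρ 0 A y * walkProb G y M C
        = if ρ = y then (if A (fun _ => ρ) then walkProb G y M C else 0) else 0 := by
      intro y
      rw [wpe_zero]
      by_cases h1 : ρ = y <;> by_cases h2 : A (fun _ => ρ) <;> simp [h1, h2]
    simp only [hrhs]
    rw [Finset.sum_ite_eq]
    simp only [Finset.mem_univ, if_true]
    by_cases h2 : A (fun _ => ρ)
    · simp only [h2, if_true]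
      refine walkProb_congr ρ M fun w _ => by tauto
    · simp only [h2, if_false]
      rw [← walkProb_false (G := G) ρ M]
      refine walkProb_congr ρ M fun w _ => by tauto
  | succ T ih =>
    have harith : T+1+M = (T+M)+1 := by omega
    rw [harith, walkProb_succ]
    have hev : ∀ v : V, walkProb G v (T+M)
          (fun u => (fun w => A w ∧ C (fun i => w (T+1+i))) (prepend ρ u))
        = walkProb G v (T+M) (fun u => A (prepend ρ u) ∧ C (fun i => u (T+i))) := by
      intro v
      refine walkProb_congr v (T+M) fun u _ => ?_
      have h2 : (fun i => (prepend ρ u) (T+1+i)) = (fun i => u (T+i)) := by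
        funext i
        have h : T+1+i = (T+i)+1 := by omega
        rw [h, prepend_succ]
      show A (prepend ρ u) ∧ C (fun i => (prepend ρ u) (T+1+i))
          ↔ A (prepend ρ u) ∧ C (fun i => u (T+i))
      rw [h2]
    simp only [hev]
    have hA' : ∀ (v : V), DepOn (fun u => A (prepend ρ u)) T := by
      intro v w w' hag
      refine hA (prepend ρ w) (prepend ρ w') ?_
      intro i hi
      cases i with
      | zero => rfl
      | succ m => simpa using hag m (by omega)
    have ihs : ∀ v : V, walkProb G v (T+M)
          (fun u => A (prepend ρ u) ∧ C (fun i => u (T+i)))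
        = ∑ y : V, wpe G v T (fun u => A (prepend ρ u)) y * walkProb G y M C := by
      intro v
      exact ih v (fun u => A (prepend ρ u)) (hA' v)
    simp only [ihs, Finset.mul_sum]
    rw [Finset.sum_comm]
    refine Finset.sum_congr rfl fun y _ => ?_
    rw [wpe_succ, Finset.sum_mul]
    exact Finset.sum_congr rfl fun v _ => by ring

lemma marginal (hd : 0 < d) (hreg : G.IsRegularOfDegree d) (ρ : V) (T M : ℕ)
    (A : (ℕ → V) → Prop) (hA : DepOn A T) :
    walkProb G ρ (T+M) A = walkProb G ρ T A := by
  have h1 : walkProb G ρ (T+M) A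
      = walkProb G ρ (T+M) (fun w => A w ∧ (fun _ : ℕ → V => True) (fun i => w (T+i))) :=
    walkProb_congr _ _ fun w _ => by tauto
  rw [h1, split hd hreg ρ T M A (fun _ => True) hA]
  have h2 : ∀ y : V, walkProb G y M (fun _ : ℕ → V => True) = 1 :=
    fun y => walkProb_one hd hreg y M
  simp only [h2, mul_one]
  exact wpe_sum ρ T A

lemma walkProb_le_one (hd : 0 < d) (hreg : G.IsRegularOfDegree d) (ρ : V) (L : ℕ)
    (E : (ℕ → V) → Prop) : walkProb G ρ L E ≤ 1 := by
  rw [← walkProb_one hd hreg ρ L]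
  exact walkProb_mono ρ L fun w _ => trivial

lemma walkProb_not (hd : 0 < d) (hreg : G.IsRegularOfDegree d) (ρ : V) (L : ℕ)
    (E : (ℕ → V) → Prop) :
    1 - walkProb G ρ L (fun w => ¬ E w) ≤ walkProb G ρ L E := by
  classical
  have key : walkProb G ρ L E + walkProb G ρ L (fun w => ¬ E w) = 1 := by
    rw [← walkProb_one hd hreg ρ L]
    unfold walkProb
    rw [← Finset.sum_add_distrib]
    refine Finset.sum_congr rfl fun γ _ => ?_
    by_cases h0 : extPath L γ 0 = ρ
    · by_cases hE : E (extPath L γ)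
      · rw [if_pos ⟨h0, hE⟩, if_neg (fun hc => hc.2 hE), if_pos ⟨h0, trivial⟩, add_zero]
      · rw [if_neg (fun hc => hE hc.2), if_pos ⟨h0, hE⟩, if_pos ⟨h0, trivial⟩, zero_add]
    · rw [if_neg (fun hc => h0 hc.1), if_neg (fun hc => h0 hc.1),
        if_neg (fun hc => h0 hc.1), add_zero]
  linarith

lemma walkProb_or (ρ : V) (L : ℕ) (E F : (ℕ → V) → Prop) :
    walkProb G ρ L (fun w => E w ∨ F w)
      ≤ walkProb G ρ L E + walkProb G ρ L F := by
  classical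
  unfold walkProb
  rw [← Finset.sum_add_distrib]
  refine Finset.sum_le_sum fun γ _ => ?_
  have hw := pathWeight_nonneg (G := G) L γ
  by_cases h0 : γ 0 = ρ
  · by_cases hE : E (extPath L γ) <;> by_cases hF : F (extPath L γ) <;>
      simp [extPath_zero', h0, hE, hF] <;> linarith
  · simp [extPath_zero', h0]

lemma walkProb_exists {ι : Type*} [DecidableEq ι] (ρ : V) (L : ℕ) (S : Finset ι)
    (P : ι → (ℕ → V) → Prop) :
    walkProb G ρ L (fun w => ∃ m ∈ S, P m w) ≤ ∑ m ∈ S, walkProb G ρ L (P m) := by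
  classical
  induction S using Finset.induction with
  | empty =>
    rw [show (fun w : ℕ → V => ∃ m ∈ (∅ : Finset ι), P m w) = (fun _ => False) by
      funext w; simp]
    rw [walkProb_false]
    simp
  | insert a S' hnotmem ih =>
    calc walkProb G ρ L (fun w => ∃ m ∈ insert a S', P m w)
        ≤ walkProb G ρ L (fun w => P a w ∨ ∃ m ∈ S', P m w) := by
          refine walkProb_mono ρ L fun w hw => ?_
          obtain ⟨m, hm, hPm⟩ := hw
          rcases Finset.mem_insert.mp hm with rfl | hm'
          · exact Or.inl hPm
          · exact Or.inr ⟨m, hm', hPm⟩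
      _ ≤ walkProb G ρ L (P a) + walkProb G ρ L (fun w => ∃ m ∈ S', P m w) :=
          walkProb_or ρ L _ _
      _ ≤ walkProb G ρ L (P a) + ∑ m ∈ S', walkProb G ρ L (P m) := by linarith [ih]
      _ = ∑ m ∈ insert a S', walkProb G ρ L (P m) := by
          rw [Finset.sum_insert hnotmem]

end LC3
namespace LC3
open Finset LC LC2

variable {V : Type*} [Fintype V] [DecidableEq V] [Nonempty V]
variable {G : SimpleGraph V} [DecidableRel G.Adj] {d : ℕ}

/-- General head-splitting for path sums. -/
lemma sum_cons' (L : ℕ) (f : (Fin (L+1) → V) → ℝ) :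
    ∑ γ : Fin (L+1) → V, f γ = ∑ v : V, ∑ δ : Fin L → V, f (Fin.cons v δ) := by
  have h1 : ∑ γ : Fin (L+1) → V, f γ
      = ∑ p : V × (Fin L → V), f (Fin.cons p.1 p.2) :=
    (Fintype.sum_equiv (Fin.consEquiv (fun _ : Fin (L+1) => V))
      (fun p => f (Fin.cons p.1 p.2)) f (fun p => rfl)).symm
  rw [h1, Fintype.sum_prod_type]

lemma ite_congr0 {P Q : Prop} {_ : Decidable P} {_ : Decidable Q} {a b : ℝ}
    (hPQ : P ↔ Q) (hab : a = b) : (if P then a else 0) = (if Q then b else 0) := by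
  by_cases h : P
  · rw [if_pos h, if_pos (hPQ.mp h), hab]
  · rw [if_neg h, if_neg (fun hq => h (hPQ.mpr hq))]

lemma sum_ite_collapse {α : Type*} [Fintype α] (a : α) {P : α → Prop}
    {D : ∀ x, Decidable (P x)} (f : α → ℝ) (h : ∀ b, P b → b = a) :
    (∑ x : α, @ite ℝ (P x) (D x) (f x) 0) = @ite ℝ (P a) (D a) (f a) 0 := by
  refine Finset.sum_eq_single_of_mem a (Finset.mem_univ a) fun b _ hb => ?_
  exact if_neg fun hc => hb (h b hc)

/-- Reversal bijection on paths of length `2L`. -/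
def revEquiv (L : ℕ) : (Fin (L+L+1) → V) ≃ ((Fin (L+1) → V) × (Fin L → V)) where
  toFun γ := (fun j => γ ⟨L - (j:ℕ), by omega⟩,
              fun i => γ ⟨L+1+(i:ℕ), by have := i.isLt; omega⟩)
  invFun p := fun t => if h : (t:ℕ) ≤ L
    then p.1 ⟨L - (t:ℕ), by omega⟩
    else p.2 ⟨(t:ℕ) - (L+1), by have := t.isLt; omega⟩
  left_inv γ := by
    funext t
    dsimp only
    by_cases h : (t:ℕ) ≤ L
    · rw [dif_pos h]
      have : (⟨L - (L - (t:ℕ)), by omega⟩ : Fin (L+L+1)) = t := by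
        apply Fin.ext; simp only; omega
      rw [this]
    · rw [dif_neg h]
      have : (⟨L+1+((t:ℕ) - (L+1)), by have := t.isLt; omega⟩ : Fin (L+L+1)) = t := by
        apply Fin.ext; have := t.isLt; simp only; omega
      rw [this]
  right_inv p := by
    refine Prod.ext ?_ ?_
    · funext j
      have hj : (j:ℕ) ≤ L := by have := j.isLt; omega
      dsimp only
      rw [dif_pos (show L - (j:ℕ) ≤ L by omega)]
      have : (⟨L - (L - (j:ℕ)), by omega⟩ : Fin (L+1)) = j := by
        apply Fin.ext; simp only; omega
      rw [this]
    · funext i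
      have hi : ¬ (L+1+(i:ℕ) ≤ L) := by omega
      dsimp only
      rw [dif_neg hi]
      have : (⟨L+1+(i:ℕ) - (L+1), by have := i.isLt; omega⟩ : Fin L) = i := by
        apply Fin.ext; simp only; omega
      rw [this]

lemma image_rev_Icc (L : ℕ) : (Finset.Icc 0 L).image (fun j => L - j) = Finset.Icc 0 L := by
  ext a
  simp only [Finset.mem_image, Finset.mem_Icc]
  constructor
  · rintro ⟨j, hj, rfl⟩; omega
  · rintro ⟨-, ha⟩; exact ⟨L - a, by omega, by omega⟩

lemma image_shift_Icc (c a b : ℕ) :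
    (Finset.Icc a b).image (fun j => c + j) = Finset.Icc (c+a) (c+b) := by
  ext t
  simp only [Finset.mem_image, Finset.mem_Icc]
  constructor
  · rintro ⟨j, hj, rfl⟩; omega
  · rintro ⟨h1, h2⟩; exact ⟨t - c, by omega, by omega⟩

lemma walkRange_congr {w w' : ℕ → V} (S : Finset ℕ) (h : ∀ i ∈ S, w i = w' i) :
    walkRange w S = walkRange w' S := Finset.image_congr (fun i hi => h i hi)

lemma walkRange_comp (w : ℕ → V) (c : ℕ) (S : Finset ℕ) :
    walkRange (fun i => w (c + i)) S = walkRange w (S.image (fun j => c + j)) := by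
  unfold walkRange
  rw [Finset.image_image]
  rfl

/-- The core transfer computation for time reversal. -/
lemma transfer (hreg : G.IsRegularOfDegree d) (L : ℕ) (γ : Fin (L+L+1) → V)
    (γ₁ : Fin (L+1) → V) (δ : Fin L → V)
    (h1 : ∀ j : Fin (L+1), γ₁ j = extPath (L+L) γ (L - (j:ℕ)))
    (h2 : ∀ i : Fin L, δ i = extPath (L+L) γ (L+1+(i:ℕ))) :
    (if (walkRange (extPath (L+L) γ) (Finset.Icc 0 L)
          ∩ walkRange (extPath (L+L) γ) (Finset.Icc (L+1) (L+L))).Nonempty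
      then pathWeight G (L+L) γ else 0)
    = (if (walkRange (extPath L γ₁) (Finset.Icc 0 L)
          ∩ walkRange (extPath L (Fin.cons (γ₁ 0) δ)) (Finset.Icc 1 L)).Nonempty
      then pathWeight G L γ₁ * pathWeight G L (Fin.cons (γ₁ 0) δ) else 0) := by
  classical
  set e : ℕ → V := extPath (L+L) γ with he
  set γ₂ : Fin (L+1) → V := Fin.cons (γ₁ 0) δ with hγ₂
  have keyγ₁ : ∀ j, j ≤ L → extPath L γ₁ j = e (L - j) := by
    intro j hj
    rw [extPath_le L γ₁ j hj]
    have := h1 ⟨j, Nat.lt_succ_of_le hj⟩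
    simpa using this
  have keyγ₂ : ∀ j, j ≤ L → extPath L γ₂ j = e (L + j) := by
    intro j hj
    cases j with
    | zero =>
      rw [extPath_zero']
      have hz : γ₂ 0 = γ₁ 0 := Fin.cons_zero _ _
      rw [hz]
      have := h1 0
      simpa using this
    | succ i =>
      rw [extPath_le L γ₂ (i+1) hj]
      have hmk : (⟨i+1, Nat.lt_succ_of_le hj⟩ : Fin (L+1))
          = (⟨i, by omega⟩ : Fin L).succ := by
        apply Fin.ext; simp
      rw [hmk, hγ₂, Fin.cons_succ]
      have h2' : δ ⟨i, by omega⟩ = e (L+1+i) := by simpa using h2 ⟨i, by omega⟩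
      rw [h2']
      congr 1
      omega
  -- range identities
  have R1 : walkRange (extPath L γ₁) (Finset.Icc 0 L) = walkRange e (Finset.Icc 0 L) := by
    have step1 : walkRange (extPath L γ₁) (Finset.Icc 0 L)
        = walkRange (fun j => e (L - j)) (Finset.Icc 0 L) := by
      refine walkRange_congr _ fun i hi => ?_
      exact keyγ₁ i (by simpa using (Finset.mem_Icc.mp hi).2)
    rw [step1]
    unfold walkRange
    rw [show (fun j => e (L - j)) = e ∘ (fun j => L - j) from rfl,
      ← Finset.image_image, image_rev_Icc]
  have R2 : walkRange (extPath L γ₂) (Finset.Icc 1 L)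
      = walkRange e (Finset.Icc (L+1) (L+L)) := by
    have step1 : walkRange (extPath L γ₂) (Finset.Icc 1 L)
        = walkRange (fun j => e (L + j)) (Finset.Icc 1 L) := by
      refine walkRange_congr _ fun i hi => ?_
      exact keyγ₂ i (Finset.mem_Icc.mp hi).2
    rw [step1]
    unfold walkRange
    rw [show (fun j => e (L + j)) = e ∘ (fun j => L + j) from rfl,
      ← Finset.image_image, image_shift_Icc]
  -- weight identity
  have W : pathWeight G (L+L) γ = pathWeight G L γ₁ * pathWeight G L γ₂ := by
    have hw : pathWeight G (L+L) γ
        = ∏ i ∈ Finset.range (L+L), lazyStep G (e i) (e (i+1)) := rfl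
    rw [hw, Finset.prod_range_add]
    congr 1
    · -- first factor equals pathWeight γ₁ reversed
      have hw1 : pathWeight G L γ₁
          = ∏ i ∈ Finset.range L, lazyStep G (extPath L γ₁ i) (extPath L γ₁ (i+1)) := rfl
      have termeq : ∀ i ∈ Finset.range L,
          lazyStep G (extPath L γ₁ i) (extPath L γ₁ (i+1))
          = (fun j => lazyStep G (e j) (e (j+1))) (L - 1 - i) := by
        intro i hi
        have hiL : i < L := Finset.mem_range.mp hi
        rw [keyγ₁ i (by omega), keyγ₁ (i+1) (by omega)]
        rw [lazyStep_symm hreg]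
        have e1 : L - (i+1) = L - 1 - i := by omega
        have e2 : L - i = (L - 1 - i) + 1 := by omega
        rw [e1, e2]
      rw [hw1, Finset.prod_congr rfl termeq]
      exact (Finset.prod_range_reflect (fun j => lazyStep G (e j) (e (j+1))) L).symm
    · -- second factor equals pathWeight γ₂
      have hw2 : pathWeight G L γ₂
          = ∏ i ∈ Finset.range L, lazyStep G (extPath L γ₂ i) (extPath L γ₂ (i+1)) := rfl
      rw [hw2]
      refine Finset.prod_congr rfl fun i hi => ?_
      have hiL : i < L := Finset.mem_range.mp hi
      rw [keyγ₂ i (by omega), keyγ₂ (i+1) (by omega)]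
      congr 1
  exact ite_congr0 (by rw [R1, R2]) (by rw [W])

end LC3
namespace LC3
open Finset LC LC2

variable {V : Type*} [Fintype V] [DecidableEq V] [Nonempty V]
variable {G : SimpleGraph V} [DecidableRel G.Adj] {d : ℕ}

/-- Time-reversal identity. -/
lemma reversal (hreg : G.IsRegularOfDegree d) (L : ℕ) :
    ∑ y : V, walkProb G y (L+L) (fun u =>
        (walkRange u (Finset.Icc 0 L) ∩ walkRange u (Finset.Icc (L+1) (L+L))).Nonempty)
    = ∑ ρ : V, twoWalkProbFrom G ρ L (fun w₁ w₂ =>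
        (walkRange w₁ (Finset.Icc 0 L) ∩ walkRange w₂ (Finset.Icc 1 L)).Nonempty) := by
  have hLHS : ∑ y : V, walkProb G y (L+L) (fun u =>
        (walkRange u (Finset.Icc 0 L) ∩ walkRange u (Finset.Icc (L+1) (L+L))).Nonempty)
      = ∑ γ : Fin (L+L+1) → V,
          (if (walkRange (extPath (L+L) γ) (Finset.Icc 0 L)
              ∩ walkRange (extPath (L+L) γ) (Finset.Icc (L+1) (L+L))).Nonempty
            then pathWeight G (L+L) γ else 0) := by
    unfold walkProb
    rw [Finset.sum_comm]
    refine Finset.sum_congr rfl fun γ _ => ?_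
    refine Eq.trans (sum_ite_collapse (γ 0) _
      (fun y hc => by rw [← hc.1, extPath_zero'])) ?_
    exact ite_congr0 ⟨fun h => h.2, fun h => ⟨extPath_zero' _ _, h⟩⟩ rfl
  have hRHS : ∑ ρ : V, twoWalkProbFrom G ρ L (fun w₁ w₂ =>
        (walkRange w₁ (Finset.Icc 0 L) ∩ walkRange w₂ (Finset.Icc 1 L)).Nonempty)
      = ∑ γ₁ : Fin (L+1) → V, ∑ δ : Fin L → V,
          (if (walkRange (extPath L γ₁) (Finset.Icc 0 L)
              ∩ walkRange (extPath L (Fin.cons (γ₁ 0) δ)) (Finset.Icc 1 L)).Nonempty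
            then pathWeight G L γ₁ * pathWeight G L (Fin.cons (γ₁ 0) δ) else 0) := by
    unfold twoWalkProbFrom
    rw [Finset.sum_comm]
    refine Finset.sum_congr rfl fun γ₁ _ => ?_
    rw [Finset.sum_comm]
    refine Eq.trans (Finset.sum_congr rfl fun γ₂ _ =>
      sum_ite_collapse (γ₁ 0) _ (fun b hc => by rw [← hc.1, extPath_zero'])) ?_
    rw [sum_cons' L, Finset.sum_comm]
    refine Finset.sum_congr rfl fun δ _ => ?_
    refine Eq.trans (sum_ite_collapse (γ₁ 0) _ (fun v hc => by
      have h := hc.2.1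
      rwa [extPath_zero', Fin.cons_zero] at h)) ?_
    refine ite_congr0 ?_ rfl
    constructor
    · rintro ⟨-, -, h3⟩; exact h3
    · intro h3
      refine ⟨extPath_zero' _ _, ?_, h3⟩
      rw [extPath_zero']
      exact Fin.cons_zero _ _
  have hmain : ∑ γ : Fin (L+L+1) → V,
        (if (walkRange (extPath (L+L) γ) (Finset.Icc 0 L)
            ∩ walkRange (extPath (L+L) γ) (Finset.Icc (L+1) (L+L))).Nonempty
          then pathWeight G (L+L) γ else 0)
      = ∑ p : (Fin (L+1) → V) × (Fin L → V),
          (if (walkRange (extPath L p.1) (Finset.Icc 0 L)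
              ∩ walkRange (extPath L (Fin.cons (p.1 0) p.2)) (Finset.Icc 1 L)).Nonempty
            then pathWeight G L p.1 * pathWeight G L (Fin.cons (p.1 0) p.2) else 0) := by
    refine Fintype.sum_equiv (revEquiv L) _ _ fun γ => ?_
    refine transfer hreg L γ _ _ ?_ ?_
    · intro j
      exact (extPath_le (L+L) γ (L - (j:ℕ)) (by omega)).symm
    · intro i
      exact (extPath_le (L+L) γ (L+1+(i:ℕ)) (by have := i.isLt; omega)).symm
  rw [hLHS, hRHS, hmain, Fintype.sum_prod_type]

lemma twoWalkProbFrom_nonneg (ρ : V) (L : ℕ) (E : (ℕ → V) → (ℕ → V) → Prop) :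
    0 ≤ twoWalkProbFrom G ρ L E := by
  unfold twoWalkProbFrom
  refine Finset.sum_nonneg fun γ₁ _ => Finset.sum_nonneg fun γ₂ _ => ?_
  split_ifs
  · exact mul_nonneg (pathWeight_nonneg _ _) (pathWeight_nonneg _ _)
  · exact le_refl 0

lemma twoWalkProbFrom_le_one (hd : 0 < d) (hreg : G.IsRegularOfDegree d) (ρ : V) (L : ℕ)
    (E : (ℕ → V) → (ℕ → V) → Prop) : twoWalkProbFrom G ρ L E ≤ 1 := by
  classical
  have hsingle : (∑ γ : Fin (L+1) → V, if extPath L γ 0 = ρ then pathWeight G L γ else 0)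
      = 1 := by
    rw [← walkProb_one hd hreg ρ L]
    unfold walkProb
    refine Finset.sum_congr rfl fun γ _ => ?_
    exact ite_congr0 ⟨fun h => ⟨h, trivial⟩, fun h => h.1⟩ rfl
  calc twoWalkProbFrom G ρ L E
      ≤ ∑ γ₁ : Fin (L+1) → V, ∑ γ₂ : Fin (L+1) → V,
          (if extPath L γ₁ 0 = ρ then pathWeight G L γ₁ else 0)
          * (if extPath L γ₂ 0 = ρ then pathWeight G L γ₂ else 0) := by
        unfold twoWalkProbFrom
        refine Finset.sum_le_sum fun γ₁ _ => Finset.sum_le_sum fun γ₂ _ => ?_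
        have n1 := pathWeight_nonneg (G := G) L γ₁
        have n2 := pathWeight_nonneg (G := G) L γ₂
        split_ifs <;>
          first
            | exact le_refl _
            | (exfalso; tauto)
            | nlinarith [n1, n2]
    _ = (∑ γ₁ : Fin (L+1) → V, if extPath L γ₁ 0 = ρ then pathWeight G L γ₁ else 0)
        * (∑ γ₂ : Fin (L+1) → V, if extPath L γ₂ 0 = ρ then pathWeight G L γ₂ else 0) :=
      (Finset.sum_mul_sum _ _ _ _).symm
    _ = 1 := by rw [hsingle, mul_one]

lemma qbar_nonneg (L : ℕ) : 0 ≤ qbar G L := by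
  unfold qbar
  refine mul_nonneg (by positivity) (Finset.sum_nonneg fun ρ _ => ?_)
  exact twoWalkProbFrom_nonneg ρ L _

lemma qbar_le_one (hd : 0 < d) (hreg : G.IsRegularOfDegree d) (L : ℕ) : qbar G L ≤ 1 := by
  unfold qbar
  have h1 : ∑ ρ : V, twoWalkProbFrom G ρ L (fun w₁ w₂ =>
      (walkRange w₁ (Finset.Icc 0 L) ∩ walkRange w₂ (Finset.Icc 1 L)).Nonempty)
      ≤ (Fintype.card V : ℝ) := by
    calc ∑ ρ : V, twoWalkProbFrom G ρ L _ ≤ ∑ _ρ : V, (1:ℝ) :=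
        Finset.sum_le_sum fun ρ _ => twoWalkProbFrom_le_one hd hreg ρ L _
      _ = (Fintype.card V : ℝ) := by simp
  have hnpos : (0:ℝ) < (Fintype.card V : ℝ) := card_pos'
  calc 1/(Fintype.card V : ℝ) * ∑ ρ : V, twoWalkProbFrom G ρ L _
      ≤ 1/(Fintype.card V : ℝ) * (Fintype.card V : ℝ) := by
        refine mul_le_mul_of_nonneg_left h1 (by positivity)
    _ = 1 := by field_simp

/-- stationary average of the block event equals `qbar`. -/
lemma qbar_avg (hreg : G.IsRegularOfDegree d) (L : ℕ) :
    ∑ y : V, 1/(Fintype.card V : ℝ) * walkProb G y (L+L) (fun u =>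
        (walkRange u (Finset.Icc 0 L) ∩ walkRange u (Finset.Icc (L+1) (L+L))).Nonempty)
      = qbar G L := by
  rw [← Finset.mul_sum, reversal hreg L]
  rfl

end LC3
namespace LC3
open Finset LC LC2

variable {V : Type*} [Fintype V] [DecidableEq V] [Nonempty V]
variable {G : SimpleGraph V} [DecidableRel G.Adj] {d : ℕ}

/-- The chained decoupling estimate. -/
lemma chain (hconn : G.Connected) (hd : 0 < d) (hreg : G.IsRegularOfDegree d)
    {L q : ℕ} (hmix : q * tmix G ≤ L) (ρ : V) (m : ℕ) (r : ℕ) :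
    walkProb G ρ (m + 3*L*r) (fun w => ∀ j, j < r →
      (walkRange w (Finset.Icc (m + 3*L*j + L) (m + 3*L*j + L + L))
        ∩ walkRange w (Finset.Icc (m + 3*L*j + L + L + 1) (m + 3*L*j + L + L + L))).Nonempty)
    ≤ (qbar G L)^r + r * ((1:ℝ)/4)^q := by
  induction r generalizing ρ with
  | zero =>
    have h0 : walkProb G ρ (m + 3*L*0) (fun w => ∀ j, j < 0 →
        (walkRange w (Finset.Icc (m + 3*L*j + L) (m + 3*L*j + L + L))
          ∩ walkRange w (Finset.Icc (m + 3*L*j + L + L + 1) (m + 3*L*j + L + L + L))).Nonempty)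
        = 1 := by
      rw [← walkProb_one hd hreg ρ (m + 3*L*0)]
      refine walkProb_congr _ _ fun w _ => ?_
      constructor
      · intro _; trivial
      · intro _ j hj; omega
    rw [h0]
    simp
  | succ r ih =>
    set T := m + 3*L*r with hT
    -- the inner block event
    set C : (ℕ → V) → Prop := fun u =>
      (walkRange u (Finset.Icc L (L+L))
        ∩ walkRange u (Finset.Icc (L+L+1) (L+L+L))).Nonempty with hC
    set C' : (ℕ → V) → Prop := fun u =>
      (walkRange u (Finset.Icc 0 L)
        ∩ walkRange u (Finset.Icc (L+1) (L+L))).Nonempty with hC'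
    set A : (ℕ → V) → Prop := fun w => ∀ j, j < r →
      (walkRange w (Finset.Icc (m + 3*L*j + L) (m + 3*L*j + L + L))
        ∩ walkRange w (Finset.Icc (m + 3*L*j + L + L + 1) (m + 3*L*j + L + L + L))).Nonempty
      with hA
    have harith : m + 3*L*(r+1) = T + (L + (L + L)) := by rw [hT]; ring
    have hev : walkProb G ρ (m + 3*L*(r+1)) (fun w => ∀ j, j < r+1 →
        (walkRange w (Finset.Icc (m + 3*L*j + L) (m + 3*L*j + L + L))
          ∩ walkRange w (Finset.Icc (m + 3*L*j + L + L + 1) (m + 3*L*j + L + L + L))).Nonempty)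
        = walkProb G ρ (T + (L + (L + L))) (fun w => A w ∧ C (fun i => w (T + i))) := by
      rw [← harith]
      refine walkProb_congr _ _ fun w _ => ?_
      have hCw : C (fun i => w (T + i)) ↔
          (walkRange w (Finset.Icc (m + 3*L*r + L) (m + 3*L*r + L + L))
            ∩ walkRange w (Finset.Icc (m + 3*L*r + L + L + 1)
                (m + 3*L*r + L + L + L))).Nonempty := by
        rw [hC]
        simp only
        rw [walkRange_comp w T (Finset.Icc L (L+L)),
          walkRange_comp w T (Finset.Icc (L+L+1) (L+L+L)),
          image_shift_Icc, image_shift_Icc]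
        constructor
        · intro h
          convert h using 4 <;> omega
        · intro h
          convert h using 4 <;> omega
      constructor
      · intro h
        refine ⟨fun j hj => h j (by omega), ?_⟩
        rw [hCw]
        exact h r (by omega)
      · rintro ⟨h1, h2⟩ j hj
        rcases Nat.lt_or_ge j r with hjr | hjr
        · exact h1 j hjr
        · have hjr' : j = r := by omega
          subst hjr'
          exact hCw.mp h2
    rw [hev]
    have hDep : DepOn A T := by
      intro w w' hag
      rw [hA]
      simp only
      have hrange : ∀ j, j < r →
          (walkRange w (Finset.Icc (m + 3*L*j + L) (m + 3*L*j + L + L))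
            = walkRange w' (Finset.Icc (m + 3*L*j + L) (m + 3*L*j + L + L)))
          ∧ (walkRange w (Finset.Icc (m + 3*L*j + L + L + 1) (m + 3*L*j + L + L + L))
            = walkRange w' (Finset.Icc (m + 3*L*j + L + L + 1) (m + 3*L*j + L + L + L))) := by
        intro j hj
        have e1 : 3*L*j + 3*L = 3*L*(j+1) := by ring
        have e2 : 3*L*(j+1) ≤ 3*L*r := Nat.mul_le_mul_left (3*L) (by omega)
        constructor <;>
          exact walkRange_congr _ fun i hi => hag i (by
            have := Finset.mem_Icc.mp hi
            omega)
      constructor <;> intro h j hj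
      · rw [← (hrange j hj).1, ← (hrange j hj).2]; exact h j hj
      · rw [(hrange j hj).1, (hrange j hj).2]; exact h j hj
    rw [split hd hreg ρ T (L + (L+L)) A C hDep]
    -- inner bound
    have hinner : ∀ x : V, walkProb G x (L + (L+L)) C ≤ qbar G L + ((1:ℝ)/4)^q := by
      intro x
      have hev2 : walkProb G x (L + (L+L)) C
          = walkProb G x (L + (L+L))
              (fun u => (fun _ => True) u ∧ C' (fun i => u (L + i))) := by
        refine walkProb_congr _ _ fun u _ => ?_
        have : C' (fun i => u (L + i)) ↔ C u := by
          rw [hC', hC]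
          simp only
          rw [walkRange_comp u L (Finset.Icc 0 L),
            walkRange_comp u L (Finset.Icc (L+1) (L+L)),
            image_shift_Icc, image_shift_Icc]
          constructor
          · intro h; convert h using 4 <;> omega
          · intro h; convert h using 4 <;> omega
        rw [this]
        tauto
      rw [hev2, split hd hreg x L (L+L) (fun _ => True) C' (fun w w' _ => Iff.rfl)]
      have hwpe : ∀ y : V, wpe G x L (fun _ => True) y = lazyProb G L x y :=
        fun y => wpe_true x L y
      simp only [hwpe]
      have hg0 : ∀ y : V, 0 ≤ walkProb G y (L+L) C' :=
        fun y => walkProb_nonneg y (L+L) C'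
      have hg1 : ∀ y : V, walkProb G y (L+L) C' ≤ 1 :=
        fun y => walkProb_le_one hd hreg y (L+L) C'
      have hmb := mixing_bound hconn hd hreg q L hmix x
        (fun y => walkProb G y (L+L) C') hg0 hg1
      refine le_trans hmb ?_
      have := qbar_avg hreg L
      rw [hC']
      rw [← this]
    -- combine
    have hsum : ∑ y : V, wpe G ρ T A y * walkProb G y (L + (L+L)) C
        ≤ (walkProb G ρ T A) * (qbar G L + ((1:ℝ)/4)^q) := by
      rw [← wpe_sum ρ T A, Finset.sum_mul]
      refine Finset.sum_le_sum fun y _ => ?_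
      exact mul_le_mul_of_nonneg_left (hinner y) (wpe_nonneg ρ T A y)
    refine le_trans hsum ?_
    have hQ1 : walkProb G ρ T A ≤ 1 := walkProb_le_one hd hreg ρ T A
    have hQ0 : 0 ≤ walkProb G ρ T A := walkProb_nonneg ρ T A
    have hQr : walkProb G ρ T A ≤ (qbar G L)^r + r * ((1:ℝ)/4)^q := ih ρ
    have hq0 : 0 ≤ qbar G L := qbar_nonneg L
    have hq1 : qbar G L ≤ 1 := qbar_le_one hd hreg L
    have hε : (0:ℝ) ≤ ((1:ℝ)/4)^q := by positivity
    have hpow : (0:ℝ) ≤ (qbar G L)^r := pow_nonneg hq0 r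
    have hpow1 : (qbar G L)^r ≤ 1 := pow_le_one₀ hq0 hq1
    push_cast
    calc walkProb G ρ T A * (qbar G L + ((1:ℝ)/4)^q)
        ≤ walkProb G ρ T A * qbar G L + ((1:ℝ)/4)^q := by nlinarith
      _ ≤ ((qbar G L)^r + r * ((1:ℝ)/4)^q) * qbar G L + ((1:ℝ)/4)^q := by nlinarith
      _ ≤ (qbar G L)^(r+1) + (r+1) * ((1:ℝ)/4)^q := by
          rw [pow_succ]
          nlinarith [mul_nonneg (Nat.cast_nonneg r) hε]

end LC3

namespace LC3
open Finset LC LC2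

variable {V : Type*} [Fintype V] [DecidableEq V] [Nonempty V]
variable {G : SimpleGraph V} [DecidableRel G.Adj] {d : ℕ}

lemma d_pos (hconn : G.Connected) (hcard : 2 ≤ Fintype.card V)
    (hreg : G.IsRegularOfDegree d) : 0 < d := by
  have v : V := Classical.arbitrary V
  obtain ⟨w, hw⟩ := Fintype.exists_ne_of_one_lt_card (by omega) v
  obtain ⟨p⟩ := hconn w v
  cases p with
  | nil => exact absurd rfl hw
  | @cons _ u _ h q =>
    rw [← hreg w]
    exact (G.degree_pos_iff_exists_adj w).mpr ⟨u, h⟩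

end LC3

open LC LC2 LC3 in
/-- Existence of local cut points in every window of length `s`. -/
theorem existence_of_local_cut_points
    (G : SimpleGraph V) [DecidableRel G.Adj] (hconn : G.Connected)
    (hcard : 2 ≤ Fintype.card V) (d : ℕ) (hreg : G.IsRegularOfDegree d)
    (s s' N q : ℕ) (hNs : s ≤ N) (hss' : 6 * s' ≤ s)
    (hq : q * tmix G + 1 ≤ 2 * s') (ρ : V) :
    1 - ((N - s + 1 : ℕ) : ℝ) *
        ((qbar G (2 * s')) ^ (s / (6 * s')) + (s : ℝ) / (3 * 4 ^ q * (s' : ℝ))) ≤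
      walkProb G ρ (N + 2 * s') (fun w =>
        ∀ m, m ≤ N - s →
          ∃ ℓ ∈ Finset.Icc (m + 2 * s') (m + s - 2 * s'),
            walkRange w (Finset.Icc (ℓ - 2 * s') ℓ) ∩
              walkRange w (Finset.Icc (ℓ + 1) (ℓ + 2 * s')) = ∅) := by
  classical
  have hd : 0 < d := d_pos hconn hcard hreg
  have hs' : 1 ≤ s' := by
    rcases Nat.eq_zero_or_pos s' with h | h
    · omega
    · exact h
  set L : ℕ := 2 * s' with hL
  set k : ℕ := s / (6 * s') with hk
  have hmixL : q * tmix G ≤ L := by omega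
  have hk6 : k * (6*s') ≤ s := Nat.div_mul_le_self s (6*s')
  have h3Lk : 3*L*k = k*(6*s') := by rw [hL]; ring
  set Good : (ℕ → V) → Prop := fun w =>
    ∀ m, m ≤ N - s →
      ∃ ℓ ∈ Finset.Icc (m + L) (m + s - L),
        walkRange w (Finset.Icc (ℓ - L) ℓ) ∩
          walkRange w (Finset.Icc (ℓ + 1) (ℓ + L)) = ∅ with hGood
  have step1 : 1 - walkProb G ρ (N + L) (fun w => ¬ Good w)
      ≤ walkProb G ρ (N + L) Good := walkProb_not hd hreg ρ (N+L) Good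
  -- union bound
  have step2 : walkProb G ρ (N + L) (fun w => ¬ Good w)
      ≤ ∑ m ∈ Finset.range (N - s + 1), walkProb G ρ (N + L) (fun w =>
          ¬ ∃ ℓ ∈ Finset.Icc (m + L) (m + s - L),
            walkRange w (Finset.Icc (ℓ - L) ℓ) ∩
              walkRange w (Finset.Icc (ℓ + 1) (ℓ + L)) = ∅) := by
    refine le_trans (walkProb_mono ρ (N+L) (E' := fun w =>
      ∃ m ∈ Finset.range (N - s + 1),
        ¬ ∃ ℓ ∈ Finset.Icc (m + L) (m + s - L),
          walkRange w (Finset.Icc (ℓ - L) ℓ) ∩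
            walkRange w (Finset.Icc (ℓ + 1) (ℓ + L)) = ∅) ?_) ?_
    · intro w hw
      rw [hGood] at hw
      obtain ⟨m, hm⟩ := Classical.not_forall.mp hw
      have hm's := Classical.not_imp.mp hm
      exact ⟨m, Finset.mem_range.mpr (by omega), hm's.2⟩
    · exact walkProb_exists ρ (N+L) (Finset.range (N-s+1)) _
  -- per-window bound
  have step3 : ∀ m ∈ Finset.range (N - s + 1),
      walkProb G ρ (N + L) (fun w =>
          ¬ ∃ ℓ ∈ Finset.Icc (m + L) (m + s - L),
            walkRange w (Finset.Icc (ℓ - L) ℓ) ∩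
              walkRange w (Finset.Icc (ℓ + 1) (ℓ + L)) = ∅)
        ≤ (qbar G L)^k + k * ((1:ℝ)/4)^q := by
    intro m hm
    have hmN : m ≤ N - s := by
      have := Finset.mem_range.mp hm; omega
    have hmN' : m + s ≤ N := by omega
    -- monotone to the chain event
    have hstep : walkProb G ρ (N + L) (fun w =>
          ¬ ∃ ℓ ∈ Finset.Icc (m + L) (m + s - L),
            walkRange w (Finset.Icc (ℓ - L) ℓ) ∩
              walkRange w (Finset.Icc (ℓ + 1) (ℓ + L)) = ∅)
        ≤ walkProb G ρ (N + L) (fun w => ∀ j, j < k →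
          (walkRange w (Finset.Icc (m + 3*L*j + L) (m + 3*L*j + L + L))
            ∩ walkRange w (Finset.Icc (m + 3*L*j + L + L + 1)
                (m + 3*L*j + L + L + L))).Nonempty) := by
      refine walkProb_mono ρ (N+L) fun w hw => ?_
      intro j hj
      push_neg at hw
      have e1 : 3*L*j + 3*L = 3*L*(j+1) := by ring
      have hj6 : 3*L*(j+1) ≤ 3*L*k := Nat.mul_le_mul_left (3*L) (by omega)
      have hmem : m + 3*L*j + L + L ∈ Finset.Icc (m + L) (m + s - L) :=
        Finset.mem_Icc.mpr ⟨by omega, by omega⟩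
      have hne := hw (m + 3*L*j + L + L) hmem
      have hset1 : Finset.Icc ((m + 3*L*j + L + L) - L) (m + 3*L*j + L + L)
          = Finset.Icc (m + 3*L*j + L) (m + 3*L*j + L + L) := by
        congr 1
        omega
      have hset2 : Finset.Icc ((m + 3*L*j + L + L) + 1) ((m + 3*L*j + L + L) + L)
          = Finset.Icc (m + 3*L*j + L + L + 1) (m + 3*L*j + L + L + L) := by
        congr 1
      rw [hset1, hset2] at hne
      exact hne
    refine le_trans hstep ?_
    -- marginalize
    have hlen : m + 3*L*k ≤ N + L := by omega
    have hdep : DepOn (fun w : ℕ → V => ∀ j, j < k →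
        (walkRange w (Finset.Icc (m + 3*L*j + L) (m + 3*L*j + L + L))
          ∩ walkRange w (Finset.Icc (m + 3*L*j + L + L + 1)
              (m + 3*L*j + L + L + L))).Nonempty) (m + 3*L*k) := by
      intro w w' hag
      have hrange : ∀ j, j < k →
          (walkRange w (Finset.Icc (m + 3*L*j + L) (m + 3*L*j + L + L))
            = walkRange w' (Finset.Icc (m + 3*L*j + L) (m + 3*L*j + L + L)))
          ∧ (walkRange w (Finset.Icc (m + 3*L*j + L + L + 1) (m + 3*L*j + L + L + L))
            = walkRange w' (Finset.Icc (m + 3*L*j + L + L + 1)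
                (m + 3*L*j + L + L + L))) := by
        intro j hj
        have e1 : 3*L*j + 3*L = 3*L*(j+1) := by ring
        have e2 : 3*L*(j+1) ≤ 3*L*k := Nat.mul_le_mul_left (3*L) (by omega)
        constructor <;>
          exact walkRange_congr _ fun i hi => hag i (by
            have := Finset.mem_Icc.mp hi
            omega)
      constructor <;> intro h j hj
      · rw [← (hrange j hj).1, ← (hrange j hj).2]; exact h j hj
      · rw [(hrange j hj).1, (hrange j hj).2]; exact h j hj
    have hmarg : walkProb G ρ (N + L) (fun w => ∀ j, j < k →
        (walkRange w (Finset.Icc (m + 3*L*j + L) (m + 3*L*j + L + L))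
          ∩ walkRange w (Finset.Icc (m + 3*L*j + L + L + 1)
              (m + 3*L*j + L + L + L))).Nonempty)
        = walkProb G ρ (m + 3*L*k) (fun w => ∀ j, j < k →
        (walkRange w (Finset.Icc (m + 3*L*j + L) (m + 3*L*j + L + L))
          ∩ walkRange w (Finset.Icc (m + 3*L*j + L + L + 1)
              (m + 3*L*j + L + L + L))).Nonempty) := by
      have harith : N + L = (m + 3*L*k) + ((N + L) - (m + 3*L*k)) := by omega
      rw [harith]
      exact marginal hd hreg ρ _ _ _ hdep
    rw [hmarg]
    exact chain hconn hd hreg hmixL ρ m k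
  -- combine the sums
  have step4 : walkProb G ρ (N + L) (fun w => ¬ Good w)
      ≤ ((N - s + 1 : ℕ) : ℝ) * ((qbar G L)^k + k * ((1:ℝ)/4)^q) := by
    refine le_trans step2 ?_
    refine le_trans (Finset.sum_le_sum step3) ?_
    rw [Finset.sum_const, Finset.card_range, nsmul_eq_mul]
  -- error-term bound
  have hεbound : (k:ℝ) * ((1:ℝ)/4)^q ≤ (s : ℝ) / (3 * 4 ^ q * (s' : ℝ)) := by
    have h6 : (k:ℝ) * (6*(s':ℝ)) ≤ (s:ℝ) := by exact_mod_cast hk6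
    have h4 : (0:ℝ) < 4 ^ q := by positivity
    have hs'0 : (0:ℝ) < (s' : ℝ) := by exact_mod_cast hs'
    have hLHSr : (k:ℝ) * ((1:ℝ)/4)^q = (k:ℝ)/4^q := by
      rw [div_pow, one_pow]
      ring
    rw [hLHSr, div_le_div_iff₀ h4 (by positivity)]
    have hm := mul_le_mul_of_nonneg_right h6 h4.le
    have hk0 : (0:ℝ) ≤ (k:ℝ) := Nat.cast_nonneg k
    nlinarith [hm, hk0, hs'0.le, h4.le]
  have hfinal : ((N - s + 1 : ℕ) : ℝ) * ((qbar G L)^k + (k:ℝ) * ((1:ℝ)/4)^q)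
      ≤ ((N - s + 1 : ℕ) : ℝ) * ((qbar G L)^k + (s : ℝ) / (3 * 4 ^ q * (s' : ℝ))) := by
    refine mul_le_mul_of_nonneg_left (by linarith [hεbound]) (Nat.cast_nonneg _)
  linarith [step1, step4, hfinal]
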